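/- For each odd prime p there exists a Sidon set B_p ⊆ [1, p²] such that (B_p − B_p) ∩ [−√p, √p] = {0} and |B_p| > p − 2√p. -/

import Mathlib

open Pointwise

/-- `B` is a Sidon set: every nonzero integer has at most one representation
as a difference of two elements of `B`. -/
def IsSidonSet (B : Set ℤ) : Prop :=
  ∀ u : ℤ, u ≠ 0 → ({p : ℤ × ℤ | p.1 ∈ B ∧ p.2 ∈ B ∧ p.1 - p.2 = u}).Subsingleton

lemma coprime_self_succ (n : ℕ) : Nat.Coprime n (n + 1) := by
  simpa [Nat.Coprime] using Nat.coprime_comm.mp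
    (by simpa using (Nat.gcd_self_add_left n 1).trans (Nat.gcd_one_left n))

lemma quad_aux {K : Type*} [Field K] {s t s' t' : K}
    (hsum : s + t = s' + t') (hmul : s * t = s' * t') :
    (s = s' ∧ t = t') ∨ (s = t' ∧ t = s') := by
  have h : (s - s') * (s - t') = 0 := by
    have h2 : (s - s') * (s - t') = s * s - s * (s' + t') + s' * t' := by ring
    rw [h2, ← hsum, ← hmul]; ring
  rcases mul_eq_zero.mp h with h | h
  · have hss : s = s' := sub_eq_zero.mp h
    refine Or.inl ⟨hss, ?_⟩
    rw [hss] at hsum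
    exact add_left_cancel hsum
  · have hst : s = t' := sub_eq_zero.mp h
    refine Or.inr ⟨hst, ?_⟩
    rw [hst, add_comm s' t'] at hsum
    exact add_left_cancel hsum

lemma sidon_subset {B C : Set ℤ} (h : B ⊆ C) (hC : IsSidonSet C) : IsSidonSet B := by
  intro u hu x hx y hy
  exact hC u hu ⟨h hx.1, h hx.2.1, hx.2.2⟩ ⟨h hy.1, h hy.2.1, hy.2.2⟩

/-- The Ruzsa/Erdős–Turán style construction: a Sidon set of size `p - 1` in `[1, p²]`. -/
lemma exists_sidon (p : ℕ) (hp : p.Prime) (h3 : 3 ≤ p) :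
    ∃ B : Set ℤ, B.Finite ∧ IsSidonSet B ∧ (∀ b ∈ B, 1 ≤ b ∧ b ≤ (p : ℤ) ^ 2) ∧
      B.ncard = p - 1 := by
  haveI : Fact p.Prime := ⟨hp⟩
  set n : ℕ := p - 1 with hn
  have hn1 : n + 1 = p := Nat.succ_pred_eq_of_pos hp.pos
  have hn2 : 2 ≤ n := by omega
  haveI hnz : NeZero n := ⟨by omega⟩
  haveI hnpz : NeZero (n * p) := ⟨Nat.mul_ne_zero (by omega) (by omega)⟩
  have hco : Nat.Coprime n p := hn1 ▸ coprime_self_succ n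
  obtain ⟨g, hg⟩ := IsCyclic.exists_generator (α := (ZMod p)ˣ)
  have horder : orderOf g = n := by
    rw [orderOf_eq_card_of_forall_mem_zpowers hg, Nat.card_eq_fintype_card, ZMod.card_units]
  let e : ZMod (n * p) ≃+* ZMod n × ZMod p := ZMod.chineseRemainder hco
  let a : ℕ → ℕ := fun x => (e.symm ((x : ZMod n), ((g : ZMod p)) ^ x)).val
  have he : ∀ z : ZMod (n * p), e z = ((ZMod.cast z : ZMod n), (ZMod.cast z : ZMod p)) := by
    intro z
    have : e z = ZMod.cast z := rfl
    rw [this]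
    exact Prod.ext (Prod.fst_zmod_cast z) (Prod.snd_zmod_cast z)
  have ha1 : ∀ x : ℕ, ((a x : ℕ) : ZMod n) = (x : ZMod n) := by
    intro x
    have h1 : e (e.symm ((x : ZMod n), ((g : ZMod p)) ^ x)) = ((x : ZMod n), ((g : ZMod p)) ^ x) :=
      e.apply_symm_apply _
    rw [he] at h1
    have := congrArg Prod.fst h1
    simpa [a, ZMod.natCast_val] using this
  have ha2 : ∀ x : ℕ, ((a x : ℕ) : ZMod p) = ((g : ZMod p)) ^ x := by
    intro x
    have h1 : e (e.symm ((x : ZMod n), ((g : ZMod p)) ^ x)) = ((x : ZMod n), ((g : ZMod p)) ^ x) :=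
      e.apply_symm_apply _
    rw [he] at h1
    have := congrArg Prod.snd h1
    simpa [a, ZMod.natCast_val] using this
  have haval : ∀ x, a x < n * p := fun x => ZMod.val_lt _
  -- injectivity of powers of g on [0, n)
  have hgx : ∀ x y : ℕ, x < n → y < n → g ^ x = g ^ y → x = y := by
    intro x y hx hy hxy
    have := pow_eq_pow_iff_modEq.mp hxy
    rw [horder] at this
    exact this.eq_of_lt_of_lt hx hy
  have hainj : ∀ x y : ℕ, x < n → y < n → a x = a y → x = y := by
    intro x y hx hy hxy
    have h1 : ((a x : ℕ) : ZMod n) = ((a y : ℕ) : ZMod n) := by rw [hxy]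
    rw [ha1, ha1] at h1
    exact ((ZMod.natCast_eq_natCast_iff _ _ _).mp h1).eq_of_lt_of_lt hx hy
  refine ⟨(fun x : ℕ => (a x : ℤ) + 1) '' ((Finset.range n : Finset ℕ) : Set ℕ), ?_, ?_, ?_, ?_⟩
  · exact ((Finset.range n).finite_toSet).image _
  · -- Sidon
    intro u hu
    rintro ⟨b1, b2⟩ ⟨h1, h2, h12⟩ ⟨b3, b4⟩ ⟨h3', h4, h34⟩
    obtain ⟨x1, hx1, rfl⟩ := h1
    obtain ⟨x2, hx2, rfl⟩ := h2
    obtain ⟨x3, hx3, rfl⟩ := h3'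
    obtain ⟨x4, hx4, rfl⟩ := h4
    simp only [Finset.coe_range, Set.mem_Iio] at hx1 hx2 hx3 hx4
    dsimp only at h12 h34
    have hdiff : (a x1 : ℤ) + (a x4 : ℤ) = (a x3 : ℤ) + (a x2 : ℤ) := by
      have := h12.trans h34.symm
      linarith
    have hnat : a x1 + a x4 = a x3 + a x2 := by exact_mod_cast hdiff
    -- sum relation in ZMod p
    have hsum : ((g : ZMod p)) ^ x1 + ((g : ZMod p)) ^ x4
        = ((g : ZMod p)) ^ x3 + ((g : ZMod p)) ^ x2 := by
      have := congrArg (fun m : ℕ => (m : ZMod p)) hnat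
      simpa [Nat.cast_add, ha2] using this
    -- exponent relation mod n
    have hmodn : x1 + x4 ≡ x3 + x2 [MOD n] := by
      have h1 : ((a x1 + a x4 : ℕ) : ZMod n) = ((a x3 + a x2 : ℕ) : ZMod n) := by rw [hnat]
      rw [Nat.cast_add, Nat.cast_add, ha1, ha1, ha1, ha1] at h1
      exact (ZMod.natCast_eq_natCast_iff _ _ _).mp (by exact_mod_cast h1)
    have hpowu : g ^ (x1 + x4) = g ^ (x3 + x2) := by
      rw [pow_eq_pow_iff_modEq, horder]; exact hmodn
    have hmul : ((g : ZMod p)) ^ x1 * ((g : ZMod p)) ^ x4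
        = ((g : ZMod p)) ^ x3 * ((g : ZMod p)) ^ x2 := by
      have := congrArg (Units.val) hpowu
      push_cast at this
      rw [pow_add, pow_add] at this
      exact_mod_cast this
    rcases quad_aux hsum hmul with ⟨hA, hB⟩ | ⟨hA, hB⟩
    · have e13 : x1 = x3 := hgx _ _ hx1 hx3 (Units.ext (by push_cast; exact hA))
      have e42 : x4 = x2 := hgx _ _ hx4 hx2 (Units.ext (by push_cast; exact hB))
      simp [e13, e42]
    · -- then x1 = x2, so u = 0, contradiction
      have e12 : x1 = x2 := hgx _ _ hx1 hx2 (Units.ext (by push_cast; exact hA))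
      exfalso
      apply hu
      rw [← h12, e12]
      ring
  · rintro b ⟨x, hx, rfl⟩
    dsimp only
    constructor
    · linarith [Int.natCast_nonneg (a x)]
    · have h0 := haval x
      have hle : (a x : ℤ) + 1 ≤ (n : ℤ) * p := by exact_mod_cast h0
      have h2le : (n : ℤ) * p ≤ (p : ℤ) ^ 2 := by
        have hnp : (n : ℤ) ≤ p := by exact_mod_cast Nat.sub_le p 1
        nlinarith [Int.natCast_nonneg p]
      linarith
  · rw [Set.ncard_image_of_injOn, Set.ncard_coe_finset, Finset.card_range]
    intro x hx y hy hxy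
    simp only [Finset.coe_range, Set.mem_Iio] at hx hy
    dsimp only at hxy
    have : a x = a y := by exact_mod_cast (by linarith : (a x : ℤ) = a y)
    exact hainj _ _ hx hy this

theorem stmt_8 (p : ℕ) (hp : p.Prime) (hodd : Odd p) :
    ∃ B : Set ℤ, B.Finite ∧ IsSidonSet B ∧
      (∀ b ∈ B, 1 ≤ b ∧ b ≤ (p : ℤ) ^ 2) ∧
      ((B - B) ∩ {u : ℤ | |(u : ℝ)| ≤ Real.sqrt p} = {0}) ∧
      (B.ncard : ℝ) > p - 2 * Real.sqrt p := by
  classical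
  have h3 : 3 ≤ p := by
    have h2 := hp.two_le
    have ho := Nat.odd_iff.mp hodd
    omega
  obtain ⟨B₀, hfin, hsid, hbd, hcard⟩ := exists_sidon p hp h3
  set T : Set ℤ :=
    {b | b ∈ B₀ ∧ ∃ b', b' ∈ B₀ ∧ 0 < b - b' ∧ ((b - b' : ℤ) : ℝ) ≤ Real.sqrt p} with hT
  have hTsub : T ⊆ B₀ := fun b hb => hb.1
  have hTfin : T.Finite := hfin.subset hTsub
  set s : ℕ := Nat.sqrt p with hs
  have hsle : (s : ℝ) ≤ Real.sqrt p := by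
    rw [Real.le_sqrt (by positivity) (by positivity)]
    exact_mod_cast Nat.sqrt_le' p
  have hslt : s < p - 1 := by
    rw [hs, Nat.sqrt_lt']
    obtain ⟨k, rfl⟩ := Nat.exists_eq_add_of_le h3
    have hk : 3 + k - 1 = k + 2 := by omega
    rw [hk]
    nlinarith
  -- count T
  set F : ℤ → ℤ := fun b => if h : b ∈ T then b - Classical.choose h.2 else 0 with hF
  have hFval : ∀ b (hb : b ∈ T), F b = b - Classical.choose hb.2 := by
    intro b hb
    simp only [hF, dif_pos hb]
  have hFmem : ∀ b (hb : b ∈ T), F b ∈ Set.Icc (1 : ℤ) (s : ℤ) := by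
    intro b hb
    obtain ⟨hc1, hc2, hc3⟩ := Classical.choose_spec hb.2
    rw [hFval b hb]
    set d : ℤ := b - Classical.choose hb.2 with hd
    refine ⟨by omega, ?_⟩
    have hdr : (d : ℝ) ≤ Real.sqrt p := hc3
    have hd1 : (1 : ℝ) ≤ (d : ℝ) := by exact_mod_cast hc2
    have hd2 : (d : ℝ) ^ 2 ≤ p := by
      nlinarith [Real.sq_sqrt (show (0:ℝ) ≤ p by positivity), Real.sqrt_nonneg (p : ℝ)]
    have hd2' : d ^ 2 ≤ (p : ℤ) := by exact_mod_cast hd2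
    have hdn : d.toNat * d.toNat ≤ p := by
      have : (d.toNat : ℤ) * d.toNat ≤ (p : ℤ) := by
        rw [Int.toNat_of_nonneg (by omega)]; nlinarith
      exact_mod_cast this
    have : d.toNat ≤ s := Nat.le_sqrt.mpr hdn
    omega
  have hFinj : Set.InjOn F T := by
    intro b hb c hc hbc
    obtain ⟨hb1, hb2, hb3⟩ := Classical.choose_spec hb.2
    obtain ⟨hc1, hc2, hc3⟩ := Classical.choose_spec hc.2
    have hFb := hFval b hb
    have hFc := hFval c hc
    have hne : F b ≠ 0 := by rw [hFb]; omega
    have key := hsid (F b) hne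
      (show ((b, Classical.choose hb.2) : ℤ × ℤ) ∈ _ from ⟨hTsub hb, hb1, by rw [hFb]⟩)
      (show ((c, Classical.choose hc.2) : ℤ × ℤ) ∈ _ from ⟨hTsub hc, hc1, by rw [hbc, hFc]⟩)
    exact congrArg Prod.fst key
  have hTcard : T.ncard ≤ s := by
    have h1 : T.ncard = (F '' T).ncard := (Set.ncard_image_of_injOn hFinj).symm
    have h2 : F '' T ⊆ Set.Icc (1 : ℤ) (s : ℤ) := by
      rintro y ⟨b, hb, rfl⟩
      exact hFmem b hb
    have h3' : (F '' T).ncard ≤ (Set.Icc (1 : ℤ) (s : ℤ)).ncard :=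
      Set.ncard_le_ncard h2 (Set.finite_Icc _ _)
    have h4 : (Set.Icc (1 : ℤ) (s : ℤ)).ncard = s := by
      rw [← Finset.coe_Icc, Set.ncard_coe_finset, Int.card_Icc]
      simp
    omega
  have hBcard : (B₀ \ T).ncard = (p - 1) - T.ncard := by
    rw [Set.ncard_diff hTsub hTfin, hcard]
  have hBlow : p - 1 - s ≤ (B₀ \ T).ncard := by omega
  have hBne : (B₀ \ T).Nonempty := by
    rw [← Set.ncard_pos (hfin.diff : (B₀ \ T).Finite)]
    omega
  refine ⟨B₀ \ T, hfin.diff, sidon_subset Set.diff_subset hsid,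
    fun b hb => hbd b hb.1, ?_, ?_⟩
  · ext u
    simp only [Set.mem_inter_iff, Set.mem_setOf_eq, Set.mem_singleton_iff]
    constructor
    · rintro ⟨hmem, habs⟩
      rw [Set.mem_sub] at hmem
      obtain ⟨b, hb, c, hc, hbc⟩ := hmem
      by_contra hu
      rcases Ne.lt_or_gt hu with h | h
      · apply hc.2
        refine ⟨hc.1, b, hb.1, by omega, ?_⟩
        have heq : ((c - b : ℤ) : ℝ) = |(u : ℝ)| := by
          rw [abs_of_neg (show (u:ℝ) < 0 by exact_mod_cast h)]
          push_cast
          rw [← hbc]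
          push_cast; ring
        rw [heq]; exact habs
      · apply hb.2
        refine ⟨hb.1, c, hc.1, by omega, ?_⟩
        have heq : ((b - c : ℤ) : ℝ) = |(u : ℝ)| := by
          rw [abs_of_pos (show (0:ℝ) < u by exact_mod_cast h)]
          push_cast
          rw [← hbc]
          push_cast; ring
        rw [heq]; exact habs
    · rintro rfl
      obtain ⟨b, hb⟩ := hBne
      exact ⟨Set.mem_sub.mpr ⟨b, hb, b, hb, sub_self b⟩,
        by simpa using Real.sqrt_nonneg (p : ℝ)⟩
  · have hcast : ((p - 1 - s : ℕ) : ℝ) = (p : ℝ) - 1 - s := by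
      rw [Nat.cast_sub (by omega), Nat.cast_sub (by omega)]
      norm_num
    have hge : ((p : ℝ) - 1 - s) ≤ ((B₀ \ T).ncard : ℝ) := by
      rw [← hcast]
      exact_mod_cast hBlow
    have hsq1 : (1 : ℝ) < Real.sqrt p := by
      have h2 : Real.sqrt p ^ 2 = p := Real.sq_sqrt (by positivity)
      nlinarith [Real.sqrt_nonneg (p : ℝ), (show (3:ℝ) ≤ p by exact_mod_cast h3)]
    linarith
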